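/- Suppose h ∈ C_b([0,δ] × [0,∞)), p_t(x)dx converges weakly to ρδ_0 + q(x)dx, ∫_c^∞ |p_t − q| dx → 0 for all c > 0, and limsup_t ∫₀^{δ̃} |p_t| dx < ∞ for some δ̃ > 0. Then sup_{0≤x≤δ} |∫₀^∞ h(x,y)(p_t(dy) − p_∞(dy))| → 0 as t → ∞, where p_∞(dy) = ρδ_0(dy) + q(y)dy. -/

import Mathlib

open MeasureTheory Set Filter Topology

set_option maxHeartbeats 1000000 in
/-- Lemma (regularity from L¹ convergence): if `h ∈ C_b([0,δ] × [0,∞))`,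
`p_t(x)dx → ρδ₀ + q(x)dx` weakly, `∫_c^∞ |p_t - q| → 0` for every `c > 0`, and
`limsup_t ∫₀^{δ̃} |p_t| < ∞` for some `δ̃ > 0`, then
`sup_{0 ≤ x ≤ δ} |∫₀^∞ h(x,y)(p_t(dy) - p_∞(dy))| → 0` as `t → ∞`. -/
theorem stmt14 (δ ρ : ℝ) (hδ : 0 < δ) (hρ : 0 ≤ ρ)
    (h : ℝ → ℝ → ℝ) (q : ℝ → ℝ) (p : ℝ → ℝ → ℝ)
    (hh_cont : ContinuousOn (fun z : ℝ × ℝ => h z.1 z.2) (Icc 0 δ ×ˢ Ici 0))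
    (hh_bdd : ∃ M, ∀ x y, |h x y| ≤ M)
    (hq_int : IntegrableOn q (Ioi 0))
    (hp_int : ∀ t, IntegrableOn (p t) (Ioi 0))
    (hweak : ∀ φ : ℝ → ℝ, Continuous φ → (∃ M, ∀ y, |φ y| ≤ M) →
      Tendsto (fun t => ∫ y in Ioi (0:ℝ), p t y * φ y) atTop
        (𝓝 (ρ * φ 0 + ∫ y in Ioi (0:ℝ), q y * φ y)))
    (hL1 : ∀ c > (0:ℝ),
      Tendsto (fun t => ∫ y in Ioi c, |p t y - q y|) atTop (𝓝 0))
    (hnear0 : ∃ δ' > (0:ℝ), ∃ C : ℝ,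
      ∀ᶠ t in atTop, (∫ y in Ioo (0:ℝ) δ', |p t y|) ≤ C) :
    ∀ ε > 0, ∃ T : ℝ, ∀ t ≥ T, ∀ x ∈ Icc 0 δ,
      |(∫ y in Ioi (0:ℝ), h x y * (p t y - q y)) - ρ * h x 0| ≤ ε := by
  intro ε hε
  obtain ⟨M, hM⟩ := hh_bdd
  have hM0 : 0 ≤ M := (abs_nonneg _).trans (hM 0 0)
  obtain ⟨δ', hδ', C, hC⟩ := hnear0
  have hC0 : 0 ≤ C := by
    obtain ⟨t, ht⟩ := hC.exists
    exact (integral_nonneg fun y => abs_nonneg _).trans ht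
  set Q := ∫ y in Ioi (0:ℝ), |q y| with hQdef
  have hQ0 : 0 ≤ Q := integral_nonneg fun y => abs_nonneg _
  set ε₁ := ε / (3 * (C + Q + 1)) with hε₁def
  have hε₁ : 0 < ε₁ := by positivity
  -- uniform continuity of h on a compact set
  have hK : IsCompact (Icc (0:ℝ) δ ×ˢ Icc (0:ℝ) 1) := isCompact_Icc.prod isCompact_Icc
  have hsubK : (Icc (0:ℝ) δ ×ˢ Icc (0:ℝ) 1) ⊆ Icc 0 δ ×ˢ Ici 0 :=
    prod_mono_right Icc_subset_Ici_self
  have huc := hK.uniformContinuousOn_of_continuous (hh_cont.mono hsubK)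
  rw [Metric.uniformContinuousOn_iff] at huc
  obtain ⟨η, hη, huc⟩ := huc ε₁ hε₁
  -- the cutoff level c
  set c := min (min (η / 2) (δ' / 2)) 1 with hcdef
  have hc0 : 0 < c := lt_min (lt_min (by linarith) (by linarith)) one_pos
  have hc1 : c ≤ 1 := min_le_right _ _
  have hcδ' : c < δ' := lt_of_le_of_lt ((min_le_left _ _).trans (min_le_right _ _)) (by linarith)
  have hcη : c < η := lt_of_le_of_lt ((min_le_left _ _).trans (min_le_left _ _)) (by linarith)
  -- the cutoff function
  set φ : ℝ → ℝ := fun y => max 0 (min 1 (2 - (2 / c) * y)) with hφdef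
  have hφc : Continuous φ := by
    apply continuous_const.max (continuous_const.min _)
    exact continuous_const.sub (continuous_const.mul continuous_id)
  have hφ0 : φ 0 = 1 := by simp [hφdef]
  have hφ_nonneg : ∀ y, 0 ≤ φ y := fun y => le_max_left _ _
  have hφ_le1 : ∀ y, φ y ≤ 1 := fun y => max_le zero_le_one (min_le_left _ _)
  have hφbd : ∀ y, |φ y| ≤ 1 := fun y => abs_le.2 ⟨by linarith [hφ_nonneg y], hφ_le1 y⟩
  have hφ1 : ∀ y ∈ Ioc (0:ℝ) (c / 2), φ y = 1 := by
    intro y hy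
    have h1 : (2 / c) * y ≤ 1 := by
      rw [div_mul_eq_mul_div, div_le_one hc0]
      nlinarith [hy.2]
    have h2 : (1:ℝ) ≤ 2 - (2 / c) * y := by linarith
    rw [hφdef]
    simp only
    rw [min_eq_left h2, max_eq_right zero_le_one]
  -- basic integrabilities
  have hpq_int : ∀ t, IntegrableOn (fun y => p t y - q y) (Ioi (0:ℝ)) :=
    fun t => (hp_int t).sub hq_int
  have hpφ : ∀ t, IntegrableOn (fun y => p t y * φ y) (Ioi (0:ℝ)) := by
    intro t
    have := (hp_int t).bdd_mul hφc.aestronglyMeasurable.restrict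
      (ae_of_all _ fun y => (by simpa [Real.norm_eq_abs] using hφbd y : ‖φ y‖ ≤ 1))
    exact this.congr (Eventually.of_forall fun y => mul_comm _ _)
  have hqφ : IntegrableOn (fun y => q y * φ y) (Ioi (0:ℝ)) := by
    have := hq_int.bdd_mul hφc.aestronglyMeasurable.restrict
      (ae_of_all _ fun y => (by simpa [Real.norm_eq_abs] using hφbd y : ‖φ y‖ ≤ 1))
    exact this.congr (Eventually.of_forall fun y => mul_comm _ _)
  have hpqφ : ∀ t, IntegrableOn (fun y => (p t y - q y) * φ y) (Ioi (0:ℝ)) := by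
    intro t
    have := (hpq_int t).bdd_mul hφc.aestronglyMeasurable.restrict
      (ae_of_all _ fun y => (by simpa [Real.norm_eq_abs] using hφbd y : ‖φ y‖ ≤ 1))
    exact this.congr (Eventually.of_forall fun y => mul_comm _ _)
  -- weak convergence for φ
  have F3 : Tendsto (fun t => ∫ y in Ioi (0:ℝ), (p t y - q y) * φ y) atTop (𝓝 ρ) := by
    have h1 := (hweak φ hφc ⟨1, hφbd⟩).sub_const (∫ y in Ioi (0:ℝ), q y * φ y)
    rw [hφ0] at h1
    simp only [mul_one, add_sub_cancel_right] at h1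
    have heq : ∀ t, (∫ y in Ioi (0:ℝ), (p t y - q y) * φ y)
        = (∫ y in Ioi (0:ℝ), p t y * φ y) - ∫ y in Ioi (0:ℝ), q y * φ y := by
      intro t
      rw [← integral_sub (hpφ t) hqφ]
      exact integral_congr_ae (Eventually.of_forall fun y => by ring)
    simpa only [heq] using h1
  -- eventual bounds
  have hM1 : (0:ℝ) < M + 1 := by linarith
  have E1 : ∀ᶠ t in atTop, (∫ y in Ioi (c / 2), |p t y - q y|) < ε / (12 * (M + 1)) :=
    (hL1 (c / 2) (by positivity)).eventually_lt_const (by positivity)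
  have E2 : ∀ᶠ t in atTop, (∫ y in Ioi c, |p t y - q y|) < ε / (3 * (M + 1)) :=
    (hL1 c hc0).eventually_lt_const (by positivity)
  have E3 : ∀ᶠ t in atTop,
      |(∫ y in Ioi (0:ℝ), (p t y - q y) * φ y) - ρ| < ε / (6 * (M + 1)) := by
    have := Metric.tendsto_nhds.mp F3 (ε / (6 * (M + 1))) (by positivity)
    simpa [Real.dist_eq] using this
  obtain ⟨T, hT⟩ := eventually_atTop.mp (E1.and (E2.and (E3.and hC)))
  refine ⟨T, fun t ht x hx => ?_⟩
  obtain ⟨h1t, h2t, h3t, h4t⟩ := hT t ht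
  -- continuity of h x ·
  have hcx : ContinuousOn (fun y => h x y) (Ici (0:ℝ)) := by
    have hmk : ContinuousOn (fun y : ℝ => ((x, y) : ℝ × ℝ)) (Ici 0) :=
      (continuous_const.prodMk continuous_id).continuousOn
    exact hh_cont.comp hmk fun y hy => mk_mem_prod hx hy
  have hcx0 : ContinuousOn (fun y => h x y - h x 0) (Ici (0:ℝ)) := hcx.sub continuousOn_const
  -- integrabilities for this t, x
  have hd_int : IntegrableOn (fun y => p t y - q y) (Ioi (0:ℝ)) := hpq_int t
  have hd_abs : IntegrableOn (fun y => |p t y - q y|) (Ioi (0:ℝ)) := hd_int.abs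
  have hint1 : IntegrableOn (fun y => h x y * (p t y - q y)) (Ioi (0:ℝ)) :=
    hd_int.bdd_mul ((hcx.mono Ioi_subset_Ici_self).aestronglyMeasurable measurableSet_Ioi)
      (ae_of_all _ fun y => (by simpa [Real.norm_eq_abs] using hM x y : ‖h x y‖ ≤ M))
  have hsub_c : Ioc (0:ℝ) c ⊆ Ioi 0 := Ioc_subset_Ioi_self
  have hsub_ci : Ioi c ⊆ Ioi (0:ℝ) := Ioi_subset_Ioi hc0.le
  -- split the main integral
  have hsplit_total : (∫ y in Ioi (0:ℝ), h x y * (p t y - q y))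
      = (∫ y in Ioc (0:ℝ) c, h x y * (p t y - q y))
        + ∫ y in Ioi c, h x y * (p t y - q y) := by
    rw [← Ioc_union_Ioi_eq_Ioi hc0.le]
    exact setIntegral_union (Ioc_disjoint_Ioi le_rfl) measurableSet_Ioi
      (hint1.mono_set hsub_c) (hint1.mono_set hsub_ci)
  -- decompose the near-zero part
  have hmeas_c : AEStronglyMeasurable (fun y => h x y - h x 0)
      (volume.restrict (Ioc (0:ℝ) c)) :=
    (hcx0.mono ((Ioc_subset_Ioi_self).trans Ioi_subset_Ici_self)).aestronglyMeasurable
      measurableSet_Ioc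
  have hintA : IntegrableOn (fun y => (h x y - h x 0) * (p t y - q y)) (Ioc (0:ℝ) c) :=
    (hd_int.mono_set hsub_c).bdd_mul hmeas_c
      (ae_of_all _ fun y => show ‖h x y - h x 0‖ ≤ M + M by
        have := abs_sub (h x y) (h x 0)
        simp only [Real.norm_eq_abs]
        exact this.trans (add_le_add (hM x y) (hM x 0)))
  have hintB : IntegrableOn (fun y => h x 0 * (p t y - q y)) (Ioc (0:ℝ) c) :=
    (hd_int.mono_set hsub_c).const_mul _
  have hdecomp : (∫ y in Ioc (0:ℝ) c, h x y * (p t y - q y))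
      = (∫ y in Ioc (0:ℝ) c, (h x y - h x 0) * (p t y - q y))
        + h x 0 * ∫ y in Ioc (0:ℝ) c, (p t y - q y) := by
    rw [← integral_const_mul, ← integral_add hintA hintB]
    exact integral_congr_ae (Eventually.of_forall fun y => by ring)
  -- bound B1
  have hucx : ∀ y ∈ Ioc (0:ℝ) c, |h x y - h x 0| ≤ ε₁ := by
    intro y hy
    have hyK : ((x, y) : ℝ × ℝ) ∈ Icc (0:ℝ) δ ×ˢ Icc (0:ℝ) 1 :=
      mk_mem_prod hx ⟨hy.1.le, hy.2.trans hc1⟩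
    have h0K : ((x, 0) : ℝ × ℝ) ∈ Icc (0:ℝ) δ ×ˢ Icc (0:ℝ) 1 :=
      mk_mem_prod hx ⟨le_rfl, zero_le_one⟩
    have hdlt : dist ((x, y) : ℝ × ℝ) (x, 0) < η := by
      rw [Prod.dist_eq]
      simp only [dist_self, Real.dist_eq, sub_zero]
      have hyabs : |y| < η := by rw [abs_of_pos hy.1]; linarith [hy.2]
      exact sup_lt_iff.mpr ⟨hη, hyabs⟩
    exact le_of_lt (by simpa [Real.dist_eq] using huc _ hyK _ h0K hdlt)
  -- bound T1
  have hB1 : |∫ y in Ioc (0:ℝ) c, (h x y - h x 0) * (p t y - q y)| ≤ ε₁ * (C + Q) := by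
    have step1 : |∫ y in Ioc (0:ℝ) c, (h x y - h x 0) * (p t y - q y)|
        ≤ ∫ y in Ioc (0:ℝ) c, |(h x y - h x 0) * (p t y - q y)| := by
      simpa only [Real.norm_eq_abs] using norm_integral_le_integral_norm
        (μ := volume.restrict (Ioc (0:ℝ) c)) (fun y => (h x y - h x 0) * (p t y - q y))
    have intdom : IntegrableOn (fun y => ε₁ * (|p t y| + |q y|)) (Ioc (0:ℝ) c) :=
      ((((hp_int t).mono_set hsub_c).abs.add ((hq_int.mono_set hsub_c).abs))).const_mul ε₁
    have step2 : (∫ y in Ioc (0:ℝ) c, |(h x y - h x 0) * (p t y - q y)|)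
        ≤ ∫ y in Ioc (0:ℝ) c, ε₁ * (|p t y| + |q y|) := by
      refine setIntegral_mono_on hintA.abs intdom measurableSet_Ioc fun y hy => ?_
      rw [abs_mul]
      have h1 := hucx y hy
      have h2 : |p t y - q y| ≤ |p t y| + |q y| := abs_sub _ _
      nlinarith [abs_nonneg (p t y - q y), abs_nonneg (h x y - h x 0)]
    have step3 : (∫ y in Ioc (0:ℝ) c, ε₁ * (|p t y| + |q y|))
        = ε₁ * ((∫ y in Ioc (0:ℝ) c, |p t y|) + ∫ y in Ioc (0:ℝ) c, |q y|) := by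
      rw [integral_const_mul]
      rw [integral_add ((hp_int t).mono_set hsub_c).abs (hq_int.mono_set hsub_c).abs]
    have hple : (∫ y in Ioc (0:ℝ) c, |p t y|) ≤ C := by
      refine le_trans (setIntegral_mono_set ((hp_int t).mono_set Ioo_subset_Ioi_self).abs
        (Eventually.of_forall fun y => abs_nonneg _)
        (HasSubset.Subset.eventuallyLE (show Ioc (0:ℝ) c ⊆ Ioo 0 δ' from fun y hy => ⟨hy.1, lt_of_le_of_lt hy.2 hcδ'⟩))) h4t
    have hqle : (∫ y in Ioc (0:ℝ) c, |q y|) ≤ Q :=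
      setIntegral_mono_set hq_int.abs (Eventually.of_forall fun y => abs_nonneg _)
        (HasSubset.Subset.eventuallyLE hsub_c)
    calc |∫ y in Ioc (0:ℝ) c, (h x y - h x 0) * (p t y - q y)|
        ≤ ∫ y in Ioc (0:ℝ) c, |(h x y - h x 0) * (p t y - q y)| := step1
      _ ≤ ∫ y in Ioc (0:ℝ) c, ε₁ * (|p t y| + |q y|) := step2
      _ = ε₁ * ((∫ y in Ioc (0:ℝ) c, |p t y|) + ∫ y in Ioc (0:ℝ) c, |q y|) := step3
      _ ≤ ε₁ * (C + Q) := by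
          exact mul_le_mul_of_nonneg_left (add_le_add hple hqle) hε₁.le
  -- bound the middle term |S - ρ|
  have hc2 : (0:ℝ) < c / 2 := by linarith
  have disj1 : Disjoint (Ioc (0:ℝ) (c/2)) (Ioc (c/2) c) := by
    rw [Set.disjoint_left]; rintro y ⟨_, h1⟩ ⟨h2, _⟩; exact absurd h1 (not_le.mpr h2)
  have hsplitS : (∫ y in Ioc (0:ℝ) c, (p t y - q y))
      = (∫ y in Ioc (0:ℝ) (c/2), (p t y - q y)) + ∫ y in Ioc (c/2) c, (p t y - q y) := by
    rw [← Ioc_union_Ioc_eq_Ioc hc2.le (by linarith : c/2 ≤ c)]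
    exact setIntegral_union disj1 measurableSet_Ioc
      (hd_int.mono_set (Ioc_subset_Ioi_self.trans (Ioi_subset_Ioi le_rfl)))
      (hd_int.mono_set fun y hy => lt_trans hc2 hy.1)
  have hsplitφ : (∫ y in Ioi (0:ℝ), (p t y - q y) * φ y)
      = (∫ y in Ioc (0:ℝ) (c/2), (p t y - q y) * φ y)
        + ∫ y in Ioi (c/2), (p t y - q y) * φ y := by
    rw [← Ioc_union_Ioi_eq_Ioi hc2.le]
    exact setIntegral_union (Ioc_disjoint_Ioi le_rfl) measurableSet_Ioi
      ((hpqφ t).mono_set Ioc_subset_Ioi_self)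
      ((hpqφ t).mono_set (Ioi_subset_Ioi hc2.le))
  have hφeq : (∫ y in Ioc (0:ℝ) (c/2), (p t y - q y) * φ y)
      = ∫ y in Ioc (0:ℝ) (c/2), (p t y - q y) :=
    setIntegral_congr_fun measurableSet_Ioc fun y hy => by rw [hφ1 y hy, mul_one]
  have hB2a : |∫ y in Ioc (c/2) c, (p t y - q y)| ≤ ∫ y in Ioi (c/2), |p t y - q y| := by
    have s1 : |∫ y in Ioc (c/2) c, (p t y - q y)| ≤ ∫ y in Ioc (c/2) c, |p t y - q y| := by
      simpa only [Real.norm_eq_abs] using norm_integral_le_integral_norm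
        (μ := volume.restrict (Ioc (c/2) c)) (fun y => p t y - q y)
    refine s1.trans (setIntegral_mono_set ((hd_int.mono_set (Ioi_subset_Ioi hc2.le)).abs)
      (Eventually.of_forall fun y => abs_nonneg _)
      (HasSubset.Subset.eventuallyLE Ioc_subset_Ioi_self))
  have hB2b : |∫ y in Ioi (c/2), (p t y - q y) * φ y| ≤ ∫ y in Ioi (c/2), |p t y - q y| := by
    have s1 : |∫ y in Ioi (c/2), (p t y - q y) * φ y|
        ≤ ∫ y in Ioi (c/2), |(p t y - q y) * φ y| := by
      simpa only [Real.norm_eq_abs] using norm_integral_le_integral_norm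
        (μ := volume.restrict (Ioi (c/2))) (fun y => (p t y - q y) * φ y)
    refine s1.trans (setIntegral_mono_on ((hpqφ t).mono_set (Ioi_subset_Ioi hc2.le)).abs
      ((hd_int.mono_set (Ioi_subset_Ioi hc2.le)).abs) measurableSet_Ioi fun y _ => ?_)
    rw [abs_mul]
    calc |p t y - q y| * |φ y| ≤ |p t y - q y| * 1 :=
          mul_le_mul_of_nonneg_left (hφbd y) (abs_nonneg _)
      _ = |p t y - q y| := mul_one _
  have hSρ : |(∫ y in Ioc (0:ℝ) c, (p t y - q y)) - ρ|
      ≤ 2 * (∫ y in Ioi (c/2), |p t y - q y|)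
        + |(∫ y in Ioi (0:ℝ), (p t y - q y) * φ y) - ρ| := by
    have key : (∫ y in Ioc (0:ℝ) c, (p t y - q y)) - ρ
        = ((∫ y in Ioc (c/2) c, (p t y - q y))
            - ∫ y in Ioi (c/2), (p t y - q y) * φ y)
          + ((∫ y in Ioi (0:ℝ), (p t y - q y) * φ y) - ρ) := by
      rw [hsplitS, hsplitφ, hφeq]; ring
    rw [key]
    calc |_| ≤ |(∫ y in Ioc (c/2) c, (p t y - q y))
            - ∫ y in Ioi (c/2), (p t y - q y) * φ y|
          + |(∫ y in Ioi (0:ℝ), (p t y - q y) * φ y) - ρ| := abs_add_le _ _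
      _ ≤ (|∫ y in Ioc (c/2) c, (p t y - q y)|
            + |∫ y in Ioi (c/2), (p t y - q y) * φ y|)
          + |(∫ y in Ioi (0:ℝ), (p t y - q y) * φ y) - ρ| :=
          add_le_add_left (abs_sub _ _) _
      _ ≤ _ := by linarith [hB2a, hB2b]
  -- bound T3
  have hB3 : |∫ y in Ioi c, h x y * (p t y - q y)| ≤ M * ∫ y in Ioi c, |p t y - q y| := by
    have s1 : |∫ y in Ioi c, h x y * (p t y - q y)|
        ≤ ∫ y in Ioi c, |h x y * (p t y - q y)| := by
      simpa only [Real.norm_eq_abs] using norm_integral_le_integral_norm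
        (μ := volume.restrict (Ioi c)) (fun y => h x y * (p t y - q y))
    have s2 : (∫ y in Ioi c, |h x y * (p t y - q y)|)
        ≤ ∫ y in Ioi c, M * |p t y - q y| := by
      refine setIntegral_mono_on (hint1.mono_set hsub_ci).abs
        (((hd_int.mono_set hsub_ci).abs).const_mul M) measurableSet_Ioi fun y _ => ?_
      rw [abs_mul]
      exact mul_le_mul_of_nonneg_right (hM x y) (abs_nonneg _)
    calc |∫ y in Ioi c, h x y * (p t y - q y)| ≤ _ := s1
      _ ≤ ∫ y in Ioi c, M * |p t y - q y| := s2
      _ = M * ∫ y in Ioi c, |p t y - q y| := integral_const_mul _ _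
  -- combine
  have keyfin : (∫ y in Ioi (0:ℝ), h x y * (p t y - q y)) - ρ * h x 0
      = (∫ y in Ioc (0:ℝ) c, (h x y - h x 0) * (p t y - q y))
        + h x 0 * ((∫ y in Ioc (0:ℝ) c, (p t y - q y)) - ρ)
        + ∫ y in Ioi c, h x y * (p t y - q y) := by
    rw [hsplit_total, hdecomp]; ring
  have habs : |(∫ y in Ioi (0:ℝ), h x y * (p t y - q y)) - ρ * h x 0|
      ≤ |∫ y in Ioc (0:ℝ) c, (h x y - h x 0) * (p t y - q y)|
        + M * |(∫ y in Ioc (0:ℝ) c, (p t y - q y)) - ρ|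
        + |∫ y in Ioi c, h x y * (p t y - q y)| := by
    rw [keyfin]
    calc |_| ≤ |(∫ y in Ioc (0:ℝ) c, (h x y - h x 0) * (p t y - q y))
            + h x 0 * ((∫ y in Ioc (0:ℝ) c, (p t y - q y)) - ρ)|
          + |∫ y in Ioi c, h x y * (p t y - q y)| := abs_add_le _ _
      _ ≤ (|∫ y in Ioc (0:ℝ) c, (h x y - h x 0) * (p t y - q y)|
            + |h x 0 * ((∫ y in Ioc (0:ℝ) c, (p t y - q y)) - ρ)|)
          + |∫ y in Ioi c, h x y * (p t y - q y)| :=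
          add_le_add_left (abs_add_le _ _) _
      _ ≤ _ := by
          have : |h x 0 * ((∫ y in Ioc (0:ℝ) c, (p t y - q y)) - ρ)|
              ≤ M * |(∫ y in Ioc (0:ℝ) c, (p t y - q y)) - ρ| := by
            rw [abs_mul]
            exact mul_le_mul_of_nonneg_right (hM x 0) (abs_nonneg _)
          linarith
  -- numeric conclusion
  have hA0 : (0:ℝ) ≤ ∫ y in Ioi (c/2), |p t y - q y| := integral_nonneg fun y => abs_nonneg _
  have hE0 : (0:ℝ) ≤ ∫ y in Ioi c, |p t y - q y| := integral_nonneg fun y => abs_nonneg _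
  have hB0 : (0:ℝ) ≤ |(∫ y in Ioi (0:ℝ), (p t y - q y) * φ y) - ρ| := abs_nonneg _
  have k1 : ε₁ * (C + Q) ≤ ε / 3 := by
    have hne : C + Q + 1 ≠ 0 := by positivity
    have e : ε₁ * (C + Q + 1) = ε / 3 := by rw [hε₁def]; field_simp
    have e2 : ε₁ * (C + Q) ≤ ε₁ * (C + Q + 1) :=
      mul_le_mul_of_nonneg_left (by linarith) hε₁.le
    linarith
  have k2 : M * |(∫ y in Ioc (0:ℝ) c, (p t y - q y)) - ρ| ≤ ε / 3 := by
    have hAB : |(∫ y in Ioc (0:ℝ) c, (p t y - q y)) - ρ| ≤ ε / (3 * (M + 1)) := by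
      have e1 : 2 * (ε / (12 * (M + 1))) + ε / (6 * (M + 1)) = ε / (3 * (M + 1)) := by
        field_simp; ring
      linarith [hSρ, h1t, h3t]
    calc M * |(∫ y in Ioc (0:ℝ) c, (p t y - q y)) - ρ|
        ≤ (M + 1) * (ε / (3 * (M + 1))) :=
          mul_le_mul (by linarith) hAB (abs_nonneg _) (by linarith)
      _ = ε / 3 := by
          have hne : M + 1 ≠ 0 := by positivity
          field_simp
  have k3 : M * (∫ y in Ioi c, |p t y - q y|) ≤ ε / 3 := by
    calc M * (∫ y in Ioi c, |p t y - q y|) ≤ (M + 1) * (ε / (3 * (M + 1))) :=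
          mul_le_mul (by linarith) h2t.le hE0 (by linarith)
      _ = ε / 3 := by
          have hne : M + 1 ≠ 0 := by positivity
          field_simp
  have k4 : |∫ y in Ioi c, h x y * (p t y - q y)| ≤ ε / 3 := hB3.trans k3
  linarith [habs, hB1, k1, k2, k4]
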